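/- For f ∈ L¹_loc(X) and 1 ≤ p < ∞, define F_f(η) = (1/‖η‖)∫ f dη for η ∈ 𝓧. Then f ∈ L^p(X,μ) if and only if ‖F_f‖_{𝓛^p(𝓧)} < ∞, and in that case ‖F_f‖_{𝓛^p(𝓧)} = ‖f‖_{L^p(X,μ)}. -/

import Mathlib

open MeasureTheory Set Filter
open scoped ENNReal Classical

variable {X : Type*} [MetricSpace X] [MeasurableSpace X]

/-- Total mass of a measure, as a real number. -/
noncomputable def mass (ν : Measure X) : ℝ := (ν Set.univ).toReal

/-- The support of a measure. -/
def msupp (ν : Measure X) : Set X := {x : X | ∀ ε : ℝ, 0 < ε → 0 < ν (Metric.ball x ε)}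

/-- The set `𝓜` of measures dominated by `μ` with compact support. -/
def MM (μ : Measure X) : Set (Measure X) := {ν | ν ≤ μ ∧ IsCompact (msupp ν)}

/-- Gauge function `h` used in the definition of the mass transport metric. -/
def IsGauge (h : ℝ → ℝ) : Prop :=
  StrictMonoOn h (Set.Ici 0) ∧ ContinuousOn h (Set.Ici 0) ∧ h 0 = 0 ∧
  Tendsto (fun ε => h ε / ε) (nhdsWithin 0 (Set.Ioi 0)) (nhds 0) ∧
  (∀ a b : ℝ, 0 ≤ a → 0 ≤ b → h a + h b ≤ h (a + b)) ∧
  Tendsto h atTop atTop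

/-- `Γ_{ε,δ}(ν,η) ≠ ∅`: existence of a countable mass-transport decomposition. -/
def GammaDecomp (μ : Measure X) (ε δ : ℝ) (ν η : Measure X) : Prop :=
  ∃ νi ηi : ℕ → Measure X,
    (∀ i, νi i ∈ MM μ) ∧ (∀ i, ηi i ∈ MM μ) ∧
    ν = Measure.sum νi ∧ η = Measure.sum ηi ∧
    (∃ S : ℝ, HasSum (fun i => |mass (νi i) - mass (ηi i)|) S ∧ S ≤ δ) ∧
    (∀ i, Metric.diam (msupp (νi i) ∪ msupp (ηi i)) ≤ ε)

/-- The mass transport metric `d_𝓜`. -/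
noncomputable def dM (h : ℝ → ℝ) (μ : Measure X) (ν η : Measure X) : ℝ :=
  sInf {ε : ℝ | 0 < ε ∧ GammaDecomp μ ε (h ε) ν η}

/-- A rectifiable curve in `𝓜` subparametrized by arc-length: a `1`-Lipschitz map
`[0,b] → (𝓜, d_𝓜)`. -/
def IsCurveM (h : ℝ → ℝ) (μ : Measure X) (b : ℝ) (γ : ℝ → Measure X) : Prop :=
  0 ≤ b ∧ (∀ t ∈ Icc (0:ℝ) b, γ t ∈ MM μ) ∧
  ∀ s ∈ Icc (0:ℝ) b, ∀ t ∈ Icc (0:ℝ) b, dM h μ (γ s) (γ t) ≤ |s - t|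

/-- A rectifiable curve in `𝓧 = 𝓜 \ {0}` subparametrized by arc-length. -/
def IsCurveX (h : ℝ → ℝ) (μ : Measure X) (b : ℝ) (γ : ℝ → Measure X) : Prop :=
  IsCurveM h μ b γ ∧ ∀ t ∈ Icc (0:ℝ) b, γ t ≠ 0

/-- The mean value functional `F_f(η) = (1/‖η‖) ∫ f dη`. -/
noncomputable def FfM (f : X → ℝ) (η : Measure X) : ℝ := (∫ x, f x ∂η) / mass η

/-- `r_F^ε(η)`. -/
noncomputable def rGradE (h : ℝ → ℝ) (μ : Measure X) (F : Measure X → ℝ) (ε : ℝ)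
    (η : Measure X) : ℝ≥0∞ :=
  sSup {r : ℝ≥0∞ | ∃ (b : ℝ) (γ : ℝ → Measure X) (s : ℝ),
    IsCurveX h μ b γ ∧ γ 0 = η ∧ 0 < s ∧ s < ε ∧ s < b ∧
    r = ENNReal.ofReal (|F (γ s) - F η| / s)}

/-- The upper gradient `r_F(η) = lim_{ε→0} r_F^ε(η)`. -/
noncomputable def rGrad (h : ℝ → ℝ) (μ : Measure X) (F : Measure X → ℝ)
    (η : Measure X) : ℝ≥0∞ :=
  ⨅ (ε : ℝ) (_ : 0 < ε), rGradE h μ F ε η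

/-- Upper semicontinuous regularization along curves of `g : 𝓧 → [0,∞]`. -/
noncomputable def breveG (h : ℝ → ℝ) (μ : Measure X) (g : Measure X → ℝ≥0∞)
    (η : Measure X) : ℝ≥0∞ :=
  ⨅ (s : ℝ) (_ : 0 < s), sSup {r : ℝ≥0∞ | ∃ (b : ℝ) (γ : ℝ → Measure X) (t : ℝ),
    IsCurveX h μ b γ ∧ γ 0 = η ∧ 0 ≤ t ∧ t < s ∧ t ≤ b ∧ r = g (γ t)}

/-- `sup { Σᵢ G(ηᵢ)^p ‖ηᵢ‖ }` over finite disjointly supported families in `𝓧`. -/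
noncomputable def LpPow (μ : Measure X) (p : ℝ) (G : Measure X → ℝ≥0∞) : ℝ≥0∞ :=
  sSup {r : ℝ≥0∞ | ∃ (k : ℕ) (η : Fin k → Measure X),
    (∀ i, η i ∈ MM μ ∧ η i ≠ 0) ∧
    (∀ i j, i ≠ j → Disjoint (msupp (η i)) (msupp (η j))) ∧
    r = ∑ i, (G (η i)) ^ p * (η i) Set.univ}

/-- The `𝓛^p(𝓧)` norm of `F : 𝓧 → ℝ`. -/
noncomputable def LpNorm (μ : Measure X) (p : ℝ) (F : Measure X → ℝ) : ℝ≥0∞ :=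
  (LpPow μ p (fun η => ENNReal.ofReal |F η|)) ^ (1 / p)

/-- The `𝓛^p(𝓧)` norm for an extended exponent `p ∈ [1,∞]`. -/
noncomputable def LpNormE (μ : Measure X) (p : ℝ≥0∞) (F : Measure X → ℝ) : ℝ≥0∞ :=
  if p = ∞ then ⨆ (η : Measure X) (_ : η ∈ MM μ ∧ η ≠ 0), ENNReal.ofReal |F η|
  else LpNorm μ p.toReal F


/-! ### Auxiliary lemmas -/

lemma isClosed_msupp (ν : Measure X) : IsClosed (msupp ν) := by
  rw [← isOpen_compl_iff, Metric.isOpen_iff]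
  intro y hy
  simp only [mem_compl_iff, msupp, mem_setOf_eq, not_forall] at hy
  obtain ⟨ε, hε, h0⟩ := hy
  rw [not_lt, le_zero_iff] at h0
  refine ⟨ε/2, by positivity, fun z hz => ?_⟩
  simp only [mem_compl_iff, msupp, mem_setOf_eq, not_forall]
  refine ⟨ε/2, by positivity, ?_⟩
  rw [not_lt, le_zero_iff, ← le_zero_iff, ← h0]
  apply measure_mono
  intro w hw
  simp only [Metric.mem_ball] at *
  calc dist w y ≤ dist w z + dist z y := dist_triangle _ _ _
    _ < ε/2 + ε/2 := add_lt_add hw hz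
    _ = ε := by ring

lemma measure_compl_msupp [TopologicalSpace.SeparableSpace X] (ν : Measure X) :
    ν (msupp ν)ᶜ = 0 := by
  haveI : SecondCountableTopology X := UniformSpace.secondCountable_of_separable X
  set 𝒰 : Set (Set X) := {U | (∃ x ε, U = Metric.ball x ε) ∧ ν U = 0}
  obtain ⟨T, hTc, hT𝒰, hTU⟩ := TopologicalSpace.isOpen_sUnion_countable 𝒰
    (fun U hU => by obtain ⟨⟨x, ε, rfl⟩, -⟩ := hU; exact Metric.isOpen_ball)
  have hsub : (msupp ν)ᶜ ⊆ ⋃₀ 𝒰 := by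
    intro y hy
    simp only [mem_compl_iff, msupp, mem_setOf_eq, not_forall] at hy
    obtain ⟨ε, hε, h0⟩ := hy
    rw [not_lt, le_zero_iff] at h0
    exact ⟨Metric.ball y ε, ⟨⟨y, ε, rfl⟩, h0⟩, Metric.mem_ball_self hε⟩
  have : ν (⋃₀ T) = 0 := (measure_sUnion_null_iff hTc).2 (fun U hU => (hT𝒰 hU).2)
  exact measure_mono_null (hTU ▸ hsub) this

lemma msupp_restrict_subset (μ : Measure X) {K : Set X} (hK : MeasurableSet K) :
    msupp (μ.restrict K) ⊆ closure K := by
  intro x hx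
  rw [Metric.mem_closure_iff]
  intro ε hε
  have hpos := hx ε hε
  rw [Measure.restrict_apply' hK] at hpos
  by_contra h
  push_neg at h
  have hemp : Metric.ball x ε ∩ K = ∅ := by
    ext z; simp only [mem_inter_iff, Metric.mem_ball, mem_empty_iff_false, iff_false, not_and]
    intro hz hzK; exact absurd (by rw [dist_comm]; exact hz) (not_lt.mpr (h z hzK))
  rw [hemp, measure_empty] at hpos
  exact lt_irrefl _ hpos

lemma partA_single (ν : Measure X) (hfin : ν Set.univ ≠ ∞) (hν0 : ν ≠ 0)
    (p : ℝ) (hp : 1 ≤ p) (f : X → ℝ) (hmeas : AEStronglyMeasurable f ν) :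
    (ENNReal.ofReal |FfM f ν|) ^ p * ν Set.univ ≤ ∫⁻ x, (ENNReal.ofReal |f x|) ^ p ∂ν := by
  have hp0 : (0:ℝ) < p := lt_of_lt_of_le one_pos hp
  have hM0 : ν Set.univ ≠ 0 := by
    simpa [← Measure.measure_univ_eq_zero] using hν0
  set M : ℝ≥0∞ := ν Set.univ with hM
  have hMpos : 0 < mass ν := ENNReal.toReal_pos hM0 hfin
  by_cases hint : Integrable f ν
  case neg =>
    rw [FfM, integral_undef hint]
    simp [abs_of_nonneg, ENNReal.zero_rpow_of_pos hp0, zero_div]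
  case pos =>
  have h1 : ENNReal.ofReal |FfM f ν| = ENNReal.ofReal |∫ x, f x ∂ν| / M := by
    rw [FfM, abs_div, abs_of_pos hMpos, ENNReal.ofReal_div_of_pos hMpos, mass,
      ENNReal.ofReal_toReal hfin]
  have h2 : ENNReal.ofReal |∫ x, f x ∂ν| ≤ eLpNorm f 1 ν := by
    rw [eLpNorm_one_eq_lintegral_enorm, ← Real.enorm_eq_ofReal_abs]
    simpa [← Real.norm_eq_abs] using enorm_integral_le_lintegral_enorm (μ := ν) f
  have hq : (1:ℝ≥0∞) ≤ ENNReal.ofReal p := ENNReal.one_le_ofReal.2 hp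
  have h3 : eLpNorm f 1 ν ≤ eLpNorm f (ENNReal.ofReal p) ν * M ^ (1 - 1/p) := by
    have := eLpNorm_le_eLpNorm_mul_rpow_measure_univ (μ := ν) hq hmeas
    simpa [ENNReal.toReal_ofReal hp0.le] using this
  set Np := eLpNorm f (ENNReal.ofReal p) ν with hNp
  have hNppow : Np ^ p = ∫⁻ x, (ENNReal.ofReal |f x|) ^ p ∂ν := by
    rw [hNp, eLpNorm_eq_lintegral_rpow_enorm_toReal (by simpa using hp0) (by simp),
      ENNReal.toReal_ofReal hp0.le, one_div, ENNReal.rpow_inv_rpow hp0.ne']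
    exact lintegral_congr fun x => by rw [Real.enorm_eq_ofReal_abs]
  calc (ENNReal.ofReal |FfM f ν|) ^ p * M
      ≤ ((Np * M ^ (1 - 1/p)) / M) ^ p * M := by
        gcongr
        rw [h1]
        exact ENNReal.div_le_div_right (h2.trans h3) M
    _ = Np ^ p * (M ^ ((1 - 1/p) * p) * M ^ (-p) * M ^ (1:ℝ)) := by
        rw [ENNReal.div_rpow_of_nonneg _ _ hp0.le, ENNReal.mul_rpow_of_nonneg _ _ hp0.le,
          ← ENNReal.rpow_mul, div_eq_mul_inv, ENNReal.rpow_neg, ENNReal.rpow_one]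
        ring
    _ = Np ^ p := by
        rw [← ENNReal.rpow_add _ _ hM0 hfin, ← ENNReal.rpow_add _ _ hM0 hfin]
        have he : (1 - 1/p) * p + -p + 1 = 0 := by field_simp; ring
        rw [he, ENNReal.rpow_zero, mul_one]
    _ = ∫⁻ x, (ENNReal.ofReal |f x|) ^ p ∂ν := hNppow

lemma MM_finite_mass [TopologicalSpace.SeparableSpace X]
    (μ : Measure X) [IsFiniteMeasureOnCompacts μ] {ν : Measure X} (hν : ν ∈ MM μ) :
    ν Set.univ ≠ ∞ := by
  have h1 : ν Set.univ ≤ ν (msupp ν) + ν (msupp ν)ᶜ := by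
    rw [← Set.union_compl_self (msupp ν)]; exact measure_union_le _ _
  rw [measure_compl_msupp, add_zero] at h1
  exact ne_top_of_le_ne_top hν.2.measure_lt_top.ne
    (h1.trans (Measure.le_iff'.1 hν.1 (msupp ν)))

lemma lintegral_MM_le [TopologicalSpace.SeparableSpace X] [BorelSpace X]
    (μ : Measure X) {ν : Measure X} (hν : ν ∈ MM μ) (g : X → ℝ≥0∞) :
    ∫⁻ x, g x ∂ν ≤ ∫⁻ x in msupp ν, g x ∂μ := by
  have hS : MeasurableSet (msupp ν) := (isClosed_msupp ν).measurableSet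
  calc ∫⁻ x, g x ∂ν = ∫⁻ x in msupp ν, g x ∂ν + ∫⁻ x in (msupp ν)ᶜ, g x ∂ν :=
        (lintegral_add_compl g hS).symm
    _ = ∫⁻ x in msupp ν, g x ∂ν := by
        rw [setLIntegral_measure_zero _ _ (measure_compl_msupp ν), add_zero]
    _ ≤ ∫⁻ x in msupp ν, g x ∂μ :=
        lintegral_mono' (Measure.restrict_mono subset_rfl hν.1) le_rfl

lemma partA [TopologicalSpace.SeparableSpace X] [BorelSpace X]
    (μ : Measure X) [IsFiniteMeasureOnCompacts μ]
    (p : ℝ) (hp : 1 ≤ p) (f : X → ℝ) (hmeas : AEStronglyMeasurable f μ) :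
    LpPow μ p (fun η => ENNReal.ofReal |FfM f η|) ≤ ∫⁻ x, (ENNReal.ofReal |f x|) ^ p ∂μ := by
  refine sSup_le ?_
  rintro r ⟨k, η, hη, hdisj, rfl⟩
  have hS : ∀ i, MeasurableSet (msupp (η i)) := fun i => (isClosed_msupp _).measurableSet
  calc ∑ i, (ENNReal.ofReal |FfM f (η i)|) ^ p * (η i) Set.univ
      ≤ ∑ i, ∫⁻ x in msupp (η i), (ENNReal.ofReal |f x|) ^ p ∂μ := by
        refine Finset.sum_le_sum fun i _ => ?_
        refine le_trans (partA_single (η i) (MM_finite_mass μ (hη i).1) (hη i).2 p hp f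
          (hmeas.mono_measure (hη i).1.1)) ?_
        exact lintegral_MM_le μ (hη i).1 _
    _ = ∫⁻ x in ⋃ i, msupp (η i), (ENNReal.ofReal |f x|) ^ p ∂μ := by
        rw [lintegral_iUnion hS (fun i j hij => hdisj i j hij), tsum_fintype]
    _ ≤ ∫⁻ x, (ENNReal.ofReal |f x|) ^ p ∂μ := setLIntegral_le_lintegral _ _

/-! ### Real-valued helpers for the lower bound -/

noncomputable def mval (k : ℕ) (j : ℤ) : ℝ := min |(j:ℝ)| |(j:ℝ)+1| / 2^k

lemma floor_mem_iff (k : ℕ) (t : ℝ) (j : ℤ) :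
    ((j:ℝ)/2^k ≤ t ∧ t < ((j:ℝ)+1)/2^k) ↔ j = ⌊(2:ℝ)^k * t⌋ := by
  have h2k : (0:ℝ) < 2^k := by positivity
  rw [eq_comm, Int.floor_eq_iff, div_le_iff₀ h2k, lt_div_iff₀ h2k]
  push_cast
  constructor <;> (rintro ⟨a, b⟩; constructor <;> nlinarith)

lemma mval_nonneg (k : ℕ) (j : ℤ) : 0 ≤ mval k j := by
  have h2k : (0:ℝ) < 2^k := by positivity
  exact div_nonneg (le_min (abs_nonneg _) (abs_nonneg _)) h2k.le

lemma mval_abs_le {k : ℕ} {j : ℤ} {t : ℝ} (h1 : (j:ℝ)/2^k ≤ t) (h2 : t ≤ ((j:ℝ)+1)/2^k) :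
    mval k j ≤ |t| := by
  have h2k : (0:ℝ) < 2^k := by positivity
  rcases le_or_gt 0 (j:ℝ) with hj | hj
  · have : mval k j = (j:ℝ)/2^k := by
      rw [mval, min_eq_left (by rw [abs_of_nonneg hj, abs_of_nonneg (by linarith)]; linarith)]
      rw [abs_of_nonneg hj]
    rw [this]
    exact le_trans h1 (le_abs_self t)
  · have hj1 : (j:ℝ) + 1 ≤ 0 := by
      have h : (j:ℤ) < 0 := by exact_mod_cast hj
      have h' : (j:ℤ) + 1 ≤ 0 := by omega
      exact_mod_cast h'
    have : mval k j = (-((j:ℝ)+1))/2^k := by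
      rw [mval, min_eq_right (by rw [abs_of_nonpos hj.le, abs_of_nonpos hj1]; linarith)]
      rw [abs_of_nonpos hj1]
    rw [this]
    have h2' : t * 2^k ≤ (j:ℝ) + 1 := (le_div_iff₀ h2k).mp h2
    have ht : t ≤ 0 := by nlinarith
    rw [abs_of_nonpos ht, div_le_iff₀ h2k]
    linarith

lemma mval_floor_bounds (k : ℕ) (t : ℝ) :
    mval k ⌊(2:ℝ)^k * t⌋ ≤ |t| ∧ |t| ≤ mval k ⌊(2:ℝ)^k * t⌋ + 1/2^k := by
  have h2k : (0:ℝ) < 2^k := by positivity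
  set j := ⌊(2:ℝ)^k * t⌋ with hj
  have h1 : (j:ℝ) ≤ 2^k * t := Int.floor_le _
  have h2 : 2^k * t < (j:ℝ) + 1 := Int.lt_floor_add_one _
  constructor
  · exact mval_abs_le (by rw [div_le_iff₀ h2k]; linarith) (by rw [le_div_iff₀ h2k]; nlinarith)
  · rcases le_or_gt 0 (j:ℝ) with hjn | hjn
    · have hm : mval k j = (j:ℝ)/2^k := by
        rw [mval, min_eq_left (by rw [abs_of_nonneg hjn, abs_of_nonneg (by linarith)]; linarith),
          abs_of_nonneg hjn]
      have ht : 0 ≤ t := by nlinarith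
      rw [hm, abs_of_nonneg ht, ← add_div, le_div_iff₀ h2k]; nlinarith
    · have hj1 : (j:ℝ) + 1 ≤ 0 := by
        have h : (j:ℤ) < 0 := by exact_mod_cast hjn
        have h' : (j:ℤ) + 1 ≤ 0 := by omega
        exact_mod_cast h'
      have hm : mval k j = (-((j:ℝ)+1))/2^k := by
        rw [mval, min_eq_right (by rw [abs_of_nonpos hjn.le, abs_of_nonpos hj1]; linarith),
          abs_of_nonpos hj1]
      have ht : t ≤ 0 := by nlinarith
      rw [hm, abs_of_nonpos ht, ← add_div, le_div_iff₀ h2k]; nlinarith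

lemma Aj_disjoint (f' : X → ℝ) (k : ℕ) : Pairwise (Function.onFun Disjoint
    fun j : ℤ => f' ⁻¹' (Ico ((j:ℝ)/2^k) (((j:ℝ)+1)/2^k))) := by
  intro i j h
  refine Set.disjoint_left.2 fun x hx hx' => h ?_
  have h1 := (floor_mem_iff k (f' x) i).1 ⟨hx.1, hx.2⟩
  have h2 := (floor_mem_iff k (f' x) j).1 ⟨hx'.1, hx'.2⟩
  rw [h1, h2]

/-! ### Mean value bounds on restricted measures -/

lemma FfM_restrict_bound [BorelSpace X] (μ : Measure X) {f f' : X → ℝ}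
    (hff' : f =ᵐ[μ] f') (hf'm : Measurable f')
    {K : Set X} (hKm : MeasurableSet K) (h0 : μ K ≠ 0) (hfin : μ K ≠ ∞)
    {a b : ℝ} (hab : ∀ x ∈ K, a ≤ f' x ∧ f' x ≤ b) :
    a ≤ FfM f (μ.restrict K) ∧ FfM f (μ.restrict K) ≤ b := by
  haveI : IsFiniteMeasure (μ.restrict K) :=
    ⟨by rw [Measure.restrict_apply_univ]; exact lt_top_iff_ne_top.2 hfin⟩
  have hMpos : (0:ℝ) < (μ K).toReal := ENNReal.toReal_pos h0 hfin
  have hintc : ∀ c : ℝ, IntegrableOn (fun _ => c) K μ :=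
    fun c => integrableOn_const hfin
  have hint : IntegrableOn f' K μ := by
    refine Integrable.mono' (hintc (max |a| |b|)) hf'm.aestronglyMeasurable ?_
    refine (ae_restrict_mem hKm).mono fun x hx => ?_
    rw [Real.norm_eq_abs, abs_le]
    constructor
    · have := neg_abs_le a; have := le_max_left |a| |b|; linarith [(hab x hx).1]
    · have := le_abs_self b; have := le_max_right |a| |b|; linarith [(hab x hx).2]
  have heq : ∫ x, f x ∂(μ.restrict K) = ∫ x in K, f' x ∂μ :=
    integral_congr_ae (ae_restrict_of_ae hff')
  have hlb : a * (μ K).toReal ≤ ∫ x in K, f' x ∂μ := by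
    have := setIntegral_mono_on (hintc a) hint hKm (fun x hx => (hab x hx).1)
    rwa [setIntegral_const, smul_eq_mul, mul_comm] at this
  have hub : ∫ x in K, f' x ∂μ ≤ b * (μ K).toReal := by
    have := setIntegral_mono_on hint (hintc b) hKm (fun x hx => (hab x hx).2)
    rwa [setIntegral_const, smul_eq_mul, mul_comm] at this
  have hmass : mass (μ.restrict K) = (μ K).toReal := by
    rw [mass, Measure.restrict_apply_univ]
  rw [FfM, hmass, heq]
  constructor
  · rw [le_div_iff₀ hMpos]; linarith
  · rw [div_le_iff₀ hMpos]; linarith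

lemma partB_family [TopologicalSpace.SeparableSpace X] [BorelSpace X]
    (μ : Measure X) [IsFiniteMeasureOnCompacts μ]
    (p : ℝ) (hp0 : 0 < p) {f f' : X → ℝ} (hff' : f =ᵐ[μ] f') (hf'm : Measurable f')
    (k : ℕ) (J : Finset ℤ) (K : ℤ → Set X)
    (hKc : ∀ j ∈ J, IsCompact (K j))
    (hKA : ∀ j ∈ J, K j ⊆ f' ⁻¹' (Ico ((j:ℝ)/2^k) (((j:ℝ)+1)/2^k)))
    (hK0 : ∀ j ∈ J, μ (K j) ≠ 0) :
    ∑ j ∈ J, (ENNReal.ofReal (mval k j)) ^ p * μ (K j)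
      ≤ LpPow μ p (fun η => ENNReal.ofReal |FfM f η|) := by
  classical
  have hKm : ∀ j ∈ J, MeasurableSet (K j) := fun j hj => (hKc j hj).isClosed.measurableSet
  have hKfin : ∀ j ∈ J, μ (K j) ≠ ∞ := fun j hj => (hKc j hj).measure_lt_top.ne
  have hsub : ∀ j ∈ J, msupp (μ.restrict (K j)) ⊆ K j := by
    intro j hj
    refine (msupp_restrict_subset μ (hKm j hj)).trans ?_
    rw [(hKc j hj).isClosed.closure_eq]
  have hmem : ∀ j ∈ J, μ.restrict (K j) ∈ MM μ ∧ μ.restrict (K j) ≠ 0 := by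
    intro j hj
    refine ⟨⟨Measure.restrict_le_self,
      (hKc j hj).of_isClosed_subset (isClosed_msupp _) (hsub j hj)⟩, ?_⟩
    intro hcon
    apply hK0 j hj
    have h := congrArg (fun m : Measure X => m Set.univ) hcon
    simpa [Measure.restrict_apply_univ] using h
  have hbound : ∀ j ∈ J, (ENNReal.ofReal (mval k j)) ^ p * μ (K j)
      ≤ (ENNReal.ofReal |FfM f (μ.restrict (K j))|) ^ p * (μ.restrict (K j)) Set.univ := by
    intro j hj
    have hab : ∀ x ∈ K j, (j:ℝ)/2^k ≤ f' x ∧ f' x ≤ ((j:ℝ)+1)/2^k := by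
      intro x hx
      have h := hKA j hj hx
      exact ⟨h.1, h.2.le⟩
    obtain ⟨h1, h2⟩ := FfM_restrict_bound μ hff' hf'm (hKm j hj) (hK0 j hj) (hKfin j hj) hab
    rw [Measure.restrict_apply_univ]
    have : ENNReal.ofReal (mval k j) ≤ ENNReal.ofReal |FfM f (μ.restrict (K j))| :=
      ENNReal.ofReal_le_ofReal (mval_abs_le h1 h2)
    gcongr
  refine le_trans (Finset.sum_le_sum hbound) (le_sSup ?_)
  set e := J.orderIsoOfFin rfl with he
  set F : ℤ → ℝ≥0∞ :=
    fun j => (ENNReal.ofReal |FfM f (μ.restrict (K j))|) ^ p * (μ.restrict (K j)) Set.univ with hF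
  refine ⟨J.card, fun i => μ.restrict (K ((e i : ↥J) : ℤ)), ?_, ?_, ?_⟩
  · intro i
    exact hmem _ (e i).2
  · intro i i' hii'
    have hne : ((e i : ↥J) : ℤ) ≠ ((e i' : ↥J) : ℤ) := by
      intro hcon
      exact hii' (e.injective (Subtype.ext hcon))
    have d := Aj_disjoint f' k hne
    exact d.mono ((hsub _ (e i).2).trans (hKA _ (e i).2))
      ((hsub _ (e i').2).trans (hKA _ (e i').2))
  · calc ∑ j ∈ J, F j = ∑ a : ↥J, F a := (Finset.sum_coe_sort J F).symm
      _ = ∑ i : Fin J.card, F ((e i : ↥J) : ℤ) :=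
        (Fintype.sum_equiv e.toEquiv (fun i => F ((e i : ↥J) : ℤ)) (fun a => F (a : ℤ))
          (fun i => rfl)).symm

lemma partB [BorelSpace X] [LocallyCompactSpace X] [TopologicalSpace.SeparableSpace X]
    (μ : Measure X) [μ.Regular]
    (hμ : ∀ (x : X) (r : ℝ), 0 < r → 0 < μ (Metric.ball x r) ∧ μ (Metric.ball x r) < ⊤)
    (p : ℝ) (hp : 1 ≤ p) (f : X → ℝ) (hf : LocallyIntegrable f μ) :
    ∫⁻ x, (ENNReal.ofReal |f x|) ^ p ∂μ ≤ LpPow μ p (fun η => ENNReal.ofReal |FfM f η|) := by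
  haveI : SecondCountableTopology X := UniformSpace.secondCountable_of_separable X
  haveI : IsLocallyFiniteMeasure μ :=
    ⟨fun x => ⟨Metric.ball x 1, Metric.ball_mem_nhds x one_pos, (hμ x 1 one_pos).2⟩⟩
  have hp0 : (0:ℝ) < p := lt_of_lt_of_le one_pos hp
  obtain ⟨f', hf'sm, hff'⟩ := hf.aestronglyMeasurable
  have hf'm : Measurable f' := hf'sm.measurable
  have hcong : ∫⁻ x, (ENNReal.ofReal |f x|) ^ p ∂μ = ∫⁻ x, (ENNReal.ofReal |f' x|) ^ p ∂μ :=
    lintegral_congr_ae (hff'.mono fun x hx => by simp only [hx])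
  rw [hcong]
  refine le_of_forall_lt fun c hc => ?_
  have hc_ne : c ≠ ∞ := (lt_of_lt_of_le hc le_top).ne
  -- the approximating sequence
  set g : ℕ → X → ℝ≥0∞ := fun k x => (ENNReal.ofReal (mval k ⌊(2:ℝ)^k * f' x⌋)) ^ p with hg
  have hgmeas : ∀ k, Measurable (g k) := by
    intro k
    have h1 : Measurable fun x => ⌊(2:ℝ)^k * f' x⌋ := (hf'm.const_mul ((2:ℝ)^k)).floor
    have h2 : Measurable fun x => mval k ⌊(2:ℝ)^k * f' x⌋ :=
      (measurable_from_top (f := mval k)).comp h1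
    exact (ENNReal.measurable_ofReal.comp h2).pow_const _
  have hgtend : ∀ x, Tendsto (fun k => g k x) atTop (nhds ((ENNReal.ofReal |f' x|) ^ p)) := by
    intro x
    have h0 : Tendsto (fun k : ℕ => (1:ℝ)/2^k) atTop (nhds 0) := by
      have := tendsto_pow_atTop_nhds_zero_of_lt_one (by norm_num : (0:ℝ) ≤ 1/2)
        (by norm_num : (1:ℝ)/2 < 1)
      simpa [div_pow] using this
    have h1 : Tendsto (fun k : ℕ => mval k ⌊(2:ℝ)^k * f' x⌋) atTop (nhds |f' x|) := by
      refine tendsto_of_tendsto_of_tendsto_of_le_of_le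
        (g := fun k : ℕ => |f' x| - 1/2^k) (h := fun _ : ℕ => |f' x|) ?_ tendsto_const_nhds ?_ ?_
      · simpa using tendsto_const_nhds.sub h0
      · intro k; linarith [(mval_floor_bounds k (f' x)).2]
      · intro k; exact (mval_floor_bounds k (f' x)).1
    have h2 : Continuous fun t : ℝ≥0∞ => t ^ p := ENNReal.continuous_rpow_const
    exact ((h2.comp ENNReal.continuous_ofReal).continuousAt).tendsto.comp h1
  have fatou : ∫⁻ x, (ENNReal.ofReal |f' x|) ^ p ∂μ ≤ liminf (fun k => ∫⁻ x, g k x ∂μ) atTop := by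
    refine le_trans (le_of_eq (lintegral_congr fun x => ?_)) (lintegral_liminf_le hgmeas)
    exact ((hgtend x).liminf_eq).symm
  obtain ⟨k, hk⟩ := (eventually_lt_of_lt_liminf (lt_of_lt_of_le hc fatou)).exists
  -- decompose the integral of `g k` as a countable sum
  set A : ℤ → Set X := fun j => f' ⁻¹' (Ico ((j:ℝ)/2^k) (((j:ℝ)+1)/2^k)) with hA
  have hAm : ∀ j, MeasurableSet (A j) := fun j => hf'm measurableSet_Ico
  have hpoint : ∀ x, g k x
      = ∑' j : ℤ, Set.indicator (A j) (fun _ => (ENNReal.ofReal (mval k j)) ^ p) x := by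
    intro x
    rw [tsum_eq_single ⌊(2:ℝ)^k * f' x⌋ ?_]
    · rw [Set.indicator_of_mem]
      exact (floor_mem_iff k (f' x) _).2 rfl
    · intro j hj
      rw [Set.indicator_of_notMem]
      intro hxA
      exact hj ((floor_mem_iff k (f' x) j).1 ⟨hxA.1, hxA.2⟩)
  have hsum : ∫⁻ x, g k x ∂μ = ∑' j : ℤ, (ENNReal.ofReal (mval k j)) ^ p * μ (A j) := by
    rw [lintegral_congr hpoint,
      lintegral_tsum (fun j => (measurable_const.indicator (hAm j)).aemeasurable)]
    exact tsum_congr fun j => lintegral_indicator_const (hAm j) _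
  rw [hsum, ENNReal.tsum_eq_iSup_sum] at hk
  obtain ⟨J, hJ⟩ := lt_iSup_iff.mp hk
  set cj : ℤ → ℝ≥0∞ := fun j => (ENNReal.ofReal (mval k j)) ^ p with hcj
  have hcjfin : ∀ j, cj j ≠ ∞ :=
    fun j => ENNReal.rpow_ne_top_of_nonneg hp0.le ENNReal.ofReal_ne_top
  set J' := J.filter (fun j => cj j * μ (A j) ≠ 0) with hJ'
  have hJ'sum : c < ∑ j ∈ J', cj j * μ (A j) := by
    rw [hJ', Finset.sum_filter_ne_zero]; exact hJ
  have hJ'c : ∀ j ∈ J', cj j ≠ 0 ∧ μ (A j) ≠ 0 := by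
    intro j hj
    rw [hJ', Finset.mem_filter] at hj
    exact ⟨fun h => hj.2 (by rw [h, zero_mul]), fun h => hj.2 (by rw [h, mul_zero])⟩
  by_cases hinf : ∃ j ∈ J', μ (A j) = ∞
  · -- one cell has infinite measure: a single piece suffices
    obtain ⟨j₀, hj₀, hAinf⟩ := hinf
    have hc0 := (hJ'c j₀ hj₀).1
    have hdiv : c / cj j₀ < μ (A j₀) := by
      rw [hAinf]; exact ENNReal.div_lt_top hc_ne hc0
    obtain ⟨K, hKA, hKc, hK⟩ := (hAm j₀).exists_lt_isCompact hdiv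
    have hKne : μ K ≠ 0 := by
      intro h; rw [h] at hK; exact absurd hK (by simp)
    have hfam := partB_family μ p hp0 hff' hf'm k {j₀} (fun _ => K)
      (by simpa using hKc) (by simpa using hKA) (by simpa using hKne)
    refine lt_of_lt_of_le ?_ hfam
    rw [Finset.sum_singleton]
    calc c = cj j₀ * (c / cj j₀) := (ENNReal.mul_div_cancel hc0 (hcjfin j₀)).symm
      _ < cj j₀ * μ K := by
          rw [ENNReal.mul_lt_mul_iff_right hc0 (hcjfin j₀)]
          exact hK
  · -- all cells have finite measure
    push_neg at hinf
    have hfin : ∀ j ∈ J', cj j * μ (A j) ≠ ∞ := fun j hj =>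
      ENNReal.mul_ne_top (hcjfin j) (hinf j hj)
    set S := ∑ j ∈ J', cj j * μ (A j) with hS
    have hSfin : S ≠ ∞ := by
      rw [hS]
      exact (ENNReal.sum_lt_top.2 fun j hj => lt_top_iff_ne_top.2 (hfin j hj)).ne
    have hS0 : S ≠ 0 := fun h => by
      rw [h] at hJ'sum; exact not_lt_zero' hJ'sum
    have hcS : c / S < 1 := by
      rw [ENNReal.div_lt_iff (Or.inl hS0) (Or.inl hSfin), one_mul]
      exact hJ'sum
    obtain ⟨θ, hθ1, hθ2⟩ := exists_between hcS
    have hθ0 : θ ≠ 0 := fun h => by rw [h] at hθ1; exact not_lt_zero' hθ1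
    have hθtop : θ ≠ ∞ := (hθ2.trans_le le_top).ne
    have hchoice : ∀ j : ℤ, ∃ K, j ∈ J' →
        K ⊆ A j ∧ IsCompact K ∧ θ * (cj j * μ (A j)) / cj j < μ K := by
      intro j
      by_cases hj : j ∈ J'
      · have hlt : θ * (cj j * μ (A j)) / cj j < μ (A j) := by
          rw [ENNReal.div_lt_iff (Or.inl (hJ'c j hj).1) (Or.inl (hcjfin j))]
          calc θ * (cj j * μ (A j)) < 1 * (cj j * μ (A j)) := by
                rw [ENNReal.mul_lt_mul_iff_left
                  (mul_ne_zero (hJ'c j hj).1 (hJ'c j hj).2) (hfin j hj)]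
                exact hθ2
            _ = μ (A j) * cj j := by ring
        obtain ⟨K, h1, h2, h3⟩ := (hAm j).exists_lt_isCompact hlt
        exact ⟨K, fun _ => ⟨h1, h2, h3⟩⟩
      · exact ⟨∅, fun h => absurd h hj⟩
    choose K hK using hchoice
    have hK0 : ∀ j ∈ J', μ (K j) ≠ 0 := by
      intro j hj
      have hpos : 0 < θ * (cj j * μ (A j)) / cj j :=
        ENNReal.div_pos (mul_ne_zero hθ0 (fun h => (hJ'c j hj).1
          (by rcases mul_eq_zero.1 h with h' | h'; exact h'; exact absurd h' (hJ'c j hj).2)))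
          (hcjfin j)
      exact (lt_of_le_of_lt hpos.le ((hK j hj).2.2)).ne'
    have hfam := partB_family μ p hp0 hff' hf'm k J' K
      (fun j hj => (hK j hj).2.1) (fun j hj => (hK j hj).1) hK0
    refine lt_of_lt_of_le ?_ hfam
    calc c < θ * S := by
          rw [ENNReal.div_lt_iff (Or.inl hS0) (Or.inl hSfin)] at hθ1
          exact hθ1
      _ = ∑ j ∈ J', θ * (cj j * μ (A j)) := by rw [hS, Finset.mul_sum]
      _ ≤ ∑ j ∈ J', cj j * μ (K j) := by
          refine Finset.sum_le_sum fun j hj => ?_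
          calc θ * (cj j * μ (A j))
              = cj j * (θ * (cj j * μ (A j)) / cj j) :=
                (ENNReal.mul_div_cancel (hJ'c j hj).1 (hcjfin j)).symm
            _ ≤ cj j * μ (K j) := by
                gcongr
                exact ((hK j hj).2.2).le


/-- For `f ∈ L¹_loc(X)`: `f ∈ L^p(X)` iff `F_f ∈ 𝓛^p(𝓧)`, and the
norms agree. -/
theorem stmt13 {X : Type*} [MetricSpace X] [MeasurableSpace X] [BorelSpace X]
    [LocallyCompactSpace X] [TopologicalSpace.SeparableSpace X]
    (μ : Measure X) [μ.Regular]
    (hμ : ∀ (x : X) (r : ℝ), 0 < r → 0 < μ (Metric.ball x r) ∧ μ (Metric.ball x r) < ⊤)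
    (p : ℝ) (hp : 1 ≤ p) (f : X → ℝ) (hf : LocallyIntegrable f μ) :
    (MemLp f (ENNReal.ofReal p) μ ↔ LpNorm μ p (FfM f) < ⊤) ∧
    LpNorm μ p (FfM f) = eLpNorm f (ENNReal.ofReal p) μ := by
  haveI : SecondCountableTopology X := UniformSpace.secondCountable_of_separable X
  haveI : IsLocallyFiniteMeasure μ :=
    ⟨fun x => ⟨Metric.ball x 1, Metric.ball_mem_nhds x one_pos, (hμ x 1 one_pos).2⟩⟩
  have hp0 : (0:ℝ) < p := lt_of_lt_of_le one_pos hp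
  have key : LpPow μ p (fun η => ENNReal.ofReal |FfM f η|) = ∫⁻ x, (ENNReal.ofReal |f x|) ^ p ∂μ :=
    le_antisymm (partA μ p hp f hf.aestronglyMeasurable) (partB μ hμ p hp f hf)
  have hnorm : LpNorm μ p (FfM f) = eLpNorm f (ENNReal.ofReal p) μ := by
    rw [LpNorm, key, eLpNorm_eq_lintegral_rpow_enorm_toReal (by simpa using hp0) (by simp),
      ENNReal.toReal_ofReal hp0.le]
    congr 1
    exact lintegral_congr fun x => by rw [Real.enorm_eq_ofReal_abs]
  refine ⟨⟨fun h => ?_, fun h => ?_⟩, hnorm⟩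
  · rw [hnorm]; exact h.2
  · exact ⟨hf.aestronglyMeasurable, by rwa [← hnorm]⟩
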